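/- Let n = 2m and μ ∈ F_{2^m}^*. Then Σ_{a ∈ F_{2^n} \ F_{2^m}} (-1)^{Tr^n_1(μ (a^2+a)/(a^{2^m}+a))} = -2^m · (-1)^{Tr^m_1(μ)}. -/

import Mathlib

open Finset Polynomial

/-- The sign `(-1)^{Tr(y)}` where `Tr(y) = ∑_{i<m} y^{2^i}` is the absolute trace
(valued in the prime field, viewed inside `F`). -/
def chi {F : Type*} [Field F] [DecidableEq F] (m : ℕ) (y : F) : ℤ :=
  if (∑ i ∈ Finset.range m, y ^ 2 ^ i) = 0 then 1 else -1

section Aux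

variable {F : Type*} [Field F] [DecidableEq F]

lemma card_filter_root_le [Fintype F] (p : Polynomial F) (hp : p ≠ 0) :
    ((univ : Finset F).filter fun a => p.eval a = 0).card ≤ p.natDegree := by
  apply Polynomial.card_le_degree_of_subset_roots
  intro a ha
  rw [Finset.mem_val, Finset.mem_filter] at ha
  rw [Polynomial.mem_roots hp]
  exact ha.2

lemma trAdd [CharP F 2] (k : ℕ) (x y : F) :
    ∑ i ∈ range k, (x + y) ^ 2 ^ i
      = (∑ i ∈ range k, x ^ 2 ^ i) + ∑ i ∈ range k, y ^ 2 ^ i := by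
  rw [← Finset.sum_add_distrib]
  exact Finset.sum_congr rfl fun i _ => add_pow_char_pow ..

lemma trSq [CharP F 2] (k : ℕ) (x : F) (hx : x ^ 2 ^ k = x) :
    (∑ i ∈ range k, x ^ 2 ^ i) ^ 2 = ∑ i ∈ range k, x ^ 2 ^ i := by
  have h1 : (∑ i ∈ range k, x ^ 2 ^ i) ^ 2 = ∑ i ∈ range k, x ^ 2 ^ (i + 1) := by
    have h := map_sum (frobenius F 2) (fun i => x ^ 2 ^ i) (range k)
    simp only [frobenius_def] at h
    rw [h]
    exact Finset.sum_congr rfl fun i _ => by rw [← pow_mul, ← pow_succ]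
  rw [h1]
  have ha := Finset.sum_range_succ' (fun i => x ^ 2 ^ i) k
  have hb := Finset.sum_range_succ (fun i => x ^ 2 ^ i) k
  have hc : (∑ i ∈ range k, x ^ 2 ^ (i + 1)) + x ^ 2 ^ 0 =
      (∑ i ∈ range k, x ^ 2 ^ i) + x ^ 2 ^ k := by rw [← ha, hb]
  rw [hx, pow_zero, pow_one] at hc
  exact add_right_cancel hc

end Aux

theorem stmt_4 (m : ℕ) (hm : 1 ≤ m) (F : Type*) [Field F] [Fintype F] [DecidableEq F]
    (hF : Fintype.card F = 2 ^ (2 * m)) (μ : F) (hμ : μ ^ 2 ^ m = μ) (hμ0 : μ ≠ 0) :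
    ∑ a ∈ univ.filter (fun a : F => a ^ 2 ^ m ≠ a),
        chi (2 * m) (μ * (a ^ 2 + a) / (a ^ 2 ^ m + a))
      = -2 ^ m * chi m μ := by
  classical
  -- characteristic 2
  have hchar : ringChar F = 2 := by
    have hP := CharP.char_is_prime F (ringChar F)
    obtain ⟨n, -, hq⟩ := FiniteField.card F (ringChar F)
    have hd : ringChar F ∣ 2 ^ (2 * m) := by
      rw [← hF, hq]; exact dvd_pow_self _ n.pos.ne'
    have h2 := hP.dvd_of_dvd_pow hd
    exact (Nat.prime_dvd_prime_iff_eq hP Nat.prime_two).mp h2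
  haveI hc2 : CharP F 2 := hchar ▸ ringChar.charP F
  have h2F : (2 : F) = 0 := CharTwo.two_eq_zero
  have hq0 : (0:ℕ) < 2 ^ m := Nat.pow_pos (by norm_num)
  have hq1 : (1:ℕ) < 2 ^ m := Nat.one_lt_two_pow_iff.mpr (by omega)
  have hpowpow : ∀ x : F, (x ^ 2 ^ m) ^ 2 ^ m = x := by
    intro x
    rw [← pow_mul, ← pow_add, ← two_mul, ← hF]
    exact FiniteField.pow_card x
  have hne_iff : ∀ x y : F, x + y = 0 ↔ x = y := by
    intro x y
    constructor
    · intro h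
      have := add_eq_zero_iff_eq_neg.mp h
      rwa [CharTwo.neg_eq] at this
    · intro h; rw [h, CharTwo.add_self_eq_zero]
  set T0 : Finset F := univ.filter (fun b : F => b ^ 2 ^ m = b) with hT0def
  set fib : F → Finset F := fun b => univ.filter (fun a : F => a ^ 2 ^ m + a = b) with hfibdef
  -- fiber cardinality bound via polynomial roots
  have hfib_le : ∀ b : F, (fib b).card ≤ 2 ^ m := by
    intro b
    set p : Polynomial F := X ^ 2 ^ m + X + C b with hpdef
    have hpne : p ≠ 0 := by
      intro h
      have hco := congrArg (fun r => Polynomial.coeff r (2 ^ m)) h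
      simp [hpdef, coeff_X_pow, Polynomial.coeff_X, Polynomial.coeff_C,
        hq1.ne', hq1.ne, hq0.ne'] at hco
    have hdeg : p.natDegree ≤ 2 ^ m := by
      refine (natDegree_add_le _ _).trans
        (max_le ((natDegree_add_le _ _).trans (max_le ?_ ?_)) ?_) <;>
        simp [natDegree_X_pow, natDegree_X, natDegree_C] <;> omega
    have hsub : fib b = univ.filter (fun a => p.eval a = 0) := by
      apply Finset.filter_congr
      intro a _
      simp only [hpdef, eval_add, eval_pow, eval_X, eval_C]
      constructor
      · intro h; rw [h]
        exact (hne_iff _ _).mpr rfl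
      · intro h
        have h' : a ^ 2 ^ m + a + b + b = b := by rw [h]; rw [zero_add]
        rwa [add_assoc, CharTwo.add_self_eq_zero, add_zero] at h'
    rw [hsub]
    exact (card_filter_root_le p hpne).trans hdeg
  have hT0fib : T0 = fib 0 := by
    apply Finset.filter_congr
    intro a _
    exact (hne_iff (a ^ 2 ^ m) a).symm
  have hT0_le : T0.card ≤ 2 ^ m := by rw [hT0fib]; exact hfib_le 0
  have hmaps : ∀ a : F, a ^ 2 ^ m + a ∈ T0 := by
    intro a
    simp only [hT0def, Finset.mem_filter, Finset.mem_univ, true_and]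
    rw [add_pow_char_pow, hpowpow, add_comm]
  have hsumfib : ∑ b ∈ T0, (fib b).card = 2 ^ m * 2 ^ m := by
    have h := Finset.card_eq_sum_card_fiberwise (f := fun a : F => a ^ 2 ^ m + a)
      (s := univ) (t := T0) (fun a _ => hmaps a)
    rw [Finset.card_univ, hF, two_mul, pow_add] at h
    exact h.symm
  have hfib_eq : ∀ b ∈ T0, (fib b).card = 2 ^ m := by
    intro b hb
    by_contra h
    have hlt : ∑ c ∈ T0, (fib c).card < ∑ c ∈ T0, 2 ^ m :=
      Finset.sum_lt_sum (fun c _ => hfib_le c) ⟨b, hb, lt_of_le_of_ne (hfib_le b) h⟩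
    rw [hsumfib, Finset.sum_const, smul_eq_mul] at hlt
    have hle : T0.card * 2 ^ m ≤ 2 ^ m * 2 ^ m := Nat.mul_le_mul_right _ hT0_le
    omega
  have hT0card : T0.card = 2 ^ m := by
    have h1 : ∑ c ∈ T0, (fib c).card = T0.card * 2 ^ m := by
      rw [Finset.sum_congr rfl hfib_eq, Finset.sum_const, smul_eq_mul]
    rw [hsumfib] at h1
    exact Nat.eq_of_mul_eq_mul_right hq0 h1.symm
  have hμT0 : μ ∈ T0 := by simp [hT0def, hμ]
  -- trace values on the subfield are 0 or 1
  have htrace_mem : ∀ c ∈ T0, (∑ i ∈ range m, c ^ 2 ^ i) = 0 ∨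
      (∑ i ∈ range m, c ^ 2 ^ i) = 1 := by
    intro c hcmem
    simp only [hT0def, Finset.mem_filter, Finset.mem_univ, true_and] at hcmem
    have hsq := trSq m c hcmem
    have hfac : (∑ i ∈ range m, c ^ 2 ^ i) * ((∑ i ∈ range m, c ^ 2 ^ i) - 1) = 0 := by
      rw [mul_sub, mul_one, ← sq, hsq, sub_self]
    rcases mul_eq_zero.mp hfac with h | h
    · exact Or.inl h
    · exact Or.inr (sub_eq_zero.mp h)
  -- polynomial bounds for the trace level sets
  set P : Polynomial F := ∑ i ∈ range m, X ^ 2 ^ i with hPdef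
  have hPeval : ∀ c : F, P.eval c = ∑ i ∈ range m, c ^ 2 ^ i := by
    intro c; simp [hPdef, eval_finset_sum]
  have hPdeg : P.natDegree ≤ 2 ^ (m - 1) := by
    apply natDegree_sum_le_of_forall_le
    intro i hi
    rw [natDegree_X_pow]
    exact Nat.pow_le_pow_right (by norm_num) (by simp only [Finset.mem_range] at hi; omega)
  have hPne : P ≠ 0 := by
    intro h
    have hco := congrArg (fun r => Polynomial.coeff r 1) h
    simp only [hPdef, Polynomial.finset_sum_coeff, coeff_X_pow, Polynomial.coeff_zero] at hco
    rw [Finset.sum_eq_single_of_mem 0 (Finset.mem_range.mpr (by omega))] at hco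
    · simp at hco
    · intro i _ hi
      have h1 : (1:ℕ) ≠ 2 ^ i := (Nat.one_lt_two_pow_iff.mpr hi).ne
      simp [h1]
  have hP1ne : P + 1 ≠ 0 := by
    intro h
    have hco := congrArg (fun r => Polynomial.coeff r 0) h
    simp only [Polynomial.coeff_add, hPdef, Polynomial.finset_sum_coeff, coeff_X_pow,
      Polynomial.coeff_one, Polynomial.coeff_zero] at hco
    rw [Finset.sum_eq_zero] at hco
    · simp at hco
    · intro i _
      simp [(show 0 < 2 ^ i from Nat.pow_pos (by norm_num : (0:ℕ) < 2)).ne]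
  have hP1deg : (P + 1).natDegree ≤ 2 ^ (m - 1) := by
    refine (natDegree_add_le _ _).trans (max_le hPdeg ?_)
    simp
  set A : Finset F := T0.filter (fun c => (∑ i ∈ range m, c ^ 2 ^ i) = 0) with hAdef
  set B : Finset F := T0.filter (fun c => ¬ (∑ i ∈ range m, c ^ 2 ^ i) = 0) with hBdef
  have hA_le : A.card ≤ 2 ^ (m - 1) := by
    have hsub : A ⊆ univ.filter (fun c => P.eval c = 0) := by
      intro c hc
      simp only [hAdef, Finset.mem_filter] at hc
      simp [hPeval, hc.2]
    exact (Finset.card_le_card hsub).trans ((card_filter_root_le P hPne).trans hPdeg)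
  have hB_le : B.card ≤ 2 ^ (m - 1) := by
    have hsub : B ⊆ univ.filter (fun c => (P + 1).eval c = 0) := by
      intro c hc
      simp only [hBdef, Finset.mem_filter] at hc
      have h1 : (∑ i ∈ range m, c ^ 2 ^ i) = 1 :=
        (htrace_mem c hc.1).resolve_left hc.2
      simp only [Finset.mem_filter, Finset.mem_univ, true_and, Polynomial.eval_add,
        Polynomial.eval_one, hPeval, h1]
      exact CharTwo.add_self_eq_zero 1
    exact (Finset.card_le_card hsub).trans ((card_filter_root_le _ hP1ne).trans hP1deg)
  have hAB : A.card + B.card = 2 ^ m := by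
    rw [hAdef, hBdef, Finset.card_filter_add_card_filter_not, hT0card]
  have hABeq : A.card = B.card := by
    have h2 : 2 ^ m = 2 ^ (m - 1) + 2 ^ (m - 1) := by
      rw [← two_mul, ← pow_succ']
      congr 1
      omega
    omega
  have hsumchi : ∑ c ∈ T0, chi m c = 0 := by
    rw [← Finset.sum_filter_add_sum_filter_not T0
      (fun c => (∑ i ∈ range m, c ^ 2 ^ i) = 0)]
    have h1 : ∑ c ∈ A, chi m c = (A.card : ℤ) := by
      have hcong : ∀ c ∈ A, chi m c = 1 := by
        intro c hc
        simp only [hAdef, Finset.mem_filter] at hc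
        simp [chi, hc.2]
      rw [Finset.sum_congr rfl hcong, Finset.sum_const, nsmul_eq_mul, mul_one]
    have h2 : ∑ c ∈ B, chi m c = -(B.card : ℤ) := by
      have hcong : ∀ c ∈ B, chi m c = -1 := by
        intro c hc
        simp only [hBdef, Finset.mem_filter] at hc
        simp [chi, hc.2]
      rw [Finset.sum_congr rfl hcong, Finset.sum_const, nsmul_eq_mul, mul_neg_one]
    rw [← hAdef, ← hBdef, h1, h2, hABeq]
    ring
  -- pointwise identity for a outside the subfield
  have hpoint : ∀ a : F, a ^ 2 ^ m + a ≠ 0 →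
      chi (2 * m) (μ * (a ^ 2 + a) / (a ^ 2 ^ m + a))
        = chi m (μ * ((a ^ 2 ^ m + a) + 1)) := by
    intro a hv
    have hvq : (a ^ 2 ^ m + a) ^ 2 ^ m = a ^ 2 ^ m + a := by
      rw [add_pow_char_pow, hpowpow, add_comm]
    have hxq : (μ * (a ^ 2 + a) / (a ^ 2 ^ m + a)) ^ 2 ^ m
        = μ * ((a ^ 2 ^ m) ^ 2 + a ^ 2 ^ m) / (a ^ 2 ^ m + a) := by
      rw [div_pow, mul_pow, hμ, add_pow_char_pow, hvq, ← pow_mul, mul_comm 2 (2 ^ m), pow_mul]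
    have hxx : (μ * (a ^ 2 + a) / (a ^ 2 ^ m + a))
          + (μ * (a ^ 2 + a) / (a ^ 2 ^ m + a)) ^ 2 ^ m
        = μ * ((a ^ 2 ^ m + a) + 1) := by
      rw [hxq, ← add_div, div_eq_iff hv]
      have hv2 : (a ^ 2 ^ m + a) ^ 2 = (a ^ 2 ^ m) ^ 2 + a ^ 2 := CharTwo.add_sq _ _
      linear_combination (-μ) * hv2
    have htr : (∑ i ∈ range (2 * m), (μ * (a ^ 2 + a) / (a ^ 2 ^ m + a)) ^ 2 ^ i)
        = ∑ i ∈ range m, (μ * ((a ^ 2 ^ m + a) + 1)) ^ 2 ^ i := by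
      rw [two_mul, Finset.sum_range_add]
      have hshift : ∀ i ∈ range m, (μ * (a ^ 2 + a) / (a ^ 2 ^ m + a)) ^ 2 ^ (m + i)
          = ((μ * (a ^ 2 + a) / (a ^ 2 ^ m + a)) ^ 2 ^ m) ^ 2 ^ i := by
        intro i _; rw [← pow_mul, ← pow_add]
      rw [Finset.sum_congr rfl hshift, ← trAdd, hxx]
    simp only [chi]
    rw [htr]
  -- rewrite the summation domain
  have hfilter : (univ.filter (fun a : F => a ^ 2 ^ m ≠ a))
      = univ.filter (fun a : F => a ^ 2 ^ m + a ≠ 0) := by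
    apply Finset.filter_congr
    intro a _
    exact not_congr (hne_iff (a ^ 2 ^ m) a).symm
  rw [hfilter,
    Finset.sum_congr rfl (fun a ha => hpoint a (Finset.mem_filter.mp ha).2)]
  set T : Finset F := T0.filter (fun b => b ≠ 0) with hTdef
  have hmaps' : ∀ a ∈ univ.filter (fun a : F => a ^ 2 ^ m + a ≠ 0),
      a ^ 2 ^ m + a ∈ T := by
    intro a ha
    simp only [Finset.mem_filter, Finset.mem_univ, true_and] at ha
    simp only [hTdef, Finset.mem_filter]
    exact ⟨hmaps a, ha⟩
  rw [← Finset.sum_fiberwise_of_maps_to hmaps'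
    (f := fun a => chi m (μ * ((a ^ 2 ^ m + a) + 1)))]
  have hinner : ∀ b ∈ T,
      (∑ a ∈ (univ.filter (fun a : F => a ^ 2 ^ m + a ≠ 0)).filter
          (fun a => a ^ 2 ^ m + a = b), chi m (μ * ((a ^ 2 ^ m + a) + 1)))
        = (2 ^ m : ℤ) * chi m (μ * (b + 1)) := by
    intro b hb
    simp only [hTdef, Finset.mem_filter] at hb
    have hset : (univ.filter (fun a : F => a ^ 2 ^ m + a ≠ 0)).filter
        (fun a => a ^ 2 ^ m + a = b) = fib b := by
      rw [Finset.filter_filter]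
      apply Finset.filter_congr
      intro a _
      constructor
      · exact fun h => h.2
      · intro h
        exact ⟨by rw [h]; exact hb.2, h⟩
    have hcong : ∀ a ∈ fib b, chi m (μ * ((a ^ 2 ^ m + a) + 1)) = chi m (μ * (b + 1)) := by
      intro a ha
      simp only [hfibdef, Finset.mem_filter, Finset.mem_univ, true_and] at ha
      rw [ha]
    rw [hset, Finset.sum_congr rfl hcong, Finset.sum_const, hfib_eq b hb.1,
      nsmul_eq_mul]
    push_cast
    ring
  rw [Finset.sum_congr rfl hinner, ← Finset.mul_sum]
  have hreindex : ∑ b ∈ T, chi m (μ * (b + 1)) = ∑ c ∈ T0.erase μ, chi m c := by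
    apply Finset.sum_nbij' (i := fun b => μ * (b + 1)) (j := fun c => c / μ + 1)
    · intro b hb
      simp only [hTdef, hT0def, Finset.mem_filter, Finset.mem_univ, true_and] at hb
      simp only [Finset.mem_erase, hT0def, Finset.mem_filter, Finset.mem_univ, true_and]
      constructor
      · intro hcontra
        have hb1 : b + 1 = 1 := by
          field_simp at hcontra
          tauto
        have hb0 : b = 0 := by linear_combination hb1
        exact hb.2 hb0
      · rw [mul_pow, hμ, add_pow_char_pow, hb.1, one_pow]
    · intro c hc
      simp only [Finset.mem_erase, hT0def, Finset.mem_filter, Finset.mem_univ, true_and] at hc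
      simp only [hTdef, hT0def, Finset.mem_filter, Finset.mem_univ, true_and]
      constructor
      · rw [add_pow_char_pow, div_pow, hμ, hc.2, one_pow]
      · intro hcontra
        have h1 : c / μ = 1 := by
          have h := add_eq_zero_iff_eq_neg.mp hcontra
          rwa [CharTwo.neg_eq] at h
        have : c = μ := by
          field_simp at h1
          exact h1
        exact hc.1 this
    · intro b hb
      rw [mul_comm μ (b + 1), mul_div_assoc, div_self hμ0, mul_one]
      linear_combination h2F
    · intro c hc
      have h1 : c / μ + 1 + 1 = c / μ := by linear_combination h2F
      rw [h1, ← mul_div_assoc, mul_comm μ c, mul_div_assoc, div_self hμ0, mul_one]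
    · intro b hb
      rfl
  rw [hreindex, Finset.sum_erase_eq_sub hμT0, hsumchi]
  push_cast
  ring
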